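/- Let F be a field of characteristic p > 0 (p prime). In the universal enveloping algebra U(sl₂(F)), setting w = (h+1)² + 4fe, x = f^p, y = e^p, and z = h^p − h, the following identity holds: ∏_{k=0}^{p−1} (w − k²·1) = z² + 4xy. In other words, the Casimir-type element w satisfies the monic degree-p polynomial ∏_{k=0}^{p−1}(t − k²) − z² − 4xy over the central subalgebra generated by x, y, z. -/

import Mathlib

open LieAlgebra.SpecialLinear UniversalEnvelopingAlgebra

noncomputable section

/-- `e = E₁₂` in `sl₂(F)`. -/
def sl2E (F : Type*) [Field F] : sl (Fin 2) F := LieAlgebra.SpecialLinear.single 0 1 (by decide) (1 : F)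

/-- `f = E₂₁` in `sl₂(F)`. -/
def sl2F (F : Type*) [Field F] : sl (Fin 2) F := LieAlgebra.SpecialLinear.single 1 0 (by decide) (1 : F)

/-- `h = E₁₁ - E₂₂` in `sl₂(F)`. -/
def sl2H (F : Type*) [Field F] : sl (Fin 2) F :=
  ⟨Matrix.single 0 0 (1 : F) - Matrix.single 1 1 (1 : F), by
    change _ ∈ LinearMap.ker (Matrix.traceLinearMap (Fin 2) F F)
    rw [LinearMap.mem_ker, Matrix.traceLinearMap_apply]
    simp [Matrix.trace, Matrix.diag, Matrix.single, Fin.sum_univ_two]⟩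

open Polynomial

namespace CasimirAux

variable {p : ℕ} [Fact p.Prime]

lemma list_range_prod {M : Type*} [CommMonoid M] (f : ℕ → M) (n : ℕ) :
    ((List.range n).map f).prod = ∏ k ∈ Finset.range n, f k := by
  induction n with
  | zero => simp
  | succ n ih =>
    rw [List.range_succ, List.map_append, List.prod_append, Finset.prod_range_succ, ih]
    simp

lemma prod_univ_zmod {B : Type*} [CommRing B] [Algebra (ZMod p) B] (y : B) :
    ∏ c : ZMod p, (y - algebraMap (ZMod p) B c) = y ^ p - y := by
  have hp1 : 1 < p := (Fact.out : p.Prime).one_lt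
  have hq : Fintype.card (ZMod p) = p := ZMod.card p
  have hmonic : (X ^ p - X : (ZMod p)[X]).Monic := by
    obtain ⟨m, rfl⟩ : ∃ m, p = m + 1 := ⟨p - 1, by omega⟩
    refine monic_X_pow_sub ?_
    rw [degree_X]
    exact_mod_cast (by omega : (1:ℕ) < m + 1)
  have hroots : (X ^ p - X : (ZMod p)[X]).roots = Finset.univ.val := by
    have := FiniteField.roots_X_pow_card_sub_X (ZMod p)
    rwa [hq] at this
  have hdeg : (X ^ p - X : (ZMod p)[X]).natDegree = p :=
    FiniteField.X_pow_card_sub_X_natDegree_eq (ZMod p) hp1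
  have hcard : Multiset.card (X ^ p - X : (ZMod p)[X]).roots = (X ^ p - X : (ZMod p)[X]).natDegree := by
    rw [hroots, hdeg]; simpa using hq
  have hpoly : ∏ c : ZMod p, (X - C c) = (X ^ p - X : (ZMod p)[X]) := by
    have := prod_multiset_X_sub_C_of_monic_of_roots_card_eq hmonic hcard
    rw [hroots] at this
    rw [Finset.prod_eq_multiset_prod]
    exact this
  calc ∏ c : ZMod p, (y - algebraMap (ZMod p) B c)
      = aeval y (∏ c : ZMod p, (X - C c)) := by
        rw [map_prod]; simp
    _ = aeval y (X ^ p - X : (ZMod p)[X]) := by rw [hpoly]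
    _ = y ^ p - y := by simp

lemma prod_range_cast {B : Type*} [CommMonoid B] (g : ZMod p → B) :
    ∏ k ∈ Finset.range p, g ((k : ℕ) : ZMod p) = ∏ c : ZMod p, g c := by
  haveI : NeZero p := ⟨(Fact.out : p.Prime).ne_zero⟩
  refine Finset.prod_bij (fun k _ => ((k : ℕ) : ZMod p)) (fun a _ => Finset.mem_univ _)
    ?_ ?_ (fun a _ => rfl)
  · intro a ha b hb hab
    have := congrArg ZMod.val hab
    rwa [ZMod.val_natCast_of_lt (Finset.mem_range.mp ha),
      ZMod.val_natCast_of_lt (Finset.mem_range.mp hb)] at this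
  · intro c _
    exact ⟨c.val, Finset.mem_range.mpr (ZMod.val_lt c), by simp [ZMod.natCast_val, ZMod.cast_id]⟩

lemma prod_range_odd {B : Type*} [CommMonoid B] (hp2 : p ≠ 2) (g : ZMod p → B) :
    ∏ k ∈ Finset.range p, g ((2 * k + 1 : ℕ) : ZMod p) = ∏ c : ZMod p, g c := by
  haveI : NeZero p := ⟨(Fact.out : p.Prime).ne_zero⟩
  have h2 : (2 : ZMod p) ≠ 0 := by
    intro h
    have h2' : ((2 : ℕ) : ZMod p) = 0 := by exact_mod_cast h
    have := (ZMod.natCast_eq_zero_iff 2 p).mp h2'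
    exact hp2 (((Nat.prime_dvd_prime_iff_eq Fact.out Nat.prime_two).mp this).symm ▸ rfl)
  refine Finset.prod_bij (fun k _ => ((2 * k + 1 : ℕ) : ZMod p)) (fun a _ => Finset.mem_univ _)
    ?_ ?_ (fun a _ => rfl)
  · intro a ha b hb hab
    push_cast at hab
    have hab2 : (2 : ZMod p) * (a : ZMod p) = 2 * (b : ZMod p) := by
      have := add_right_cancel hab
      exact this
    have : ((a : ℕ) : ZMod p) = ((b : ℕ) : ZMod p) := mul_left_cancel₀ h2 hab2
    have := congrArg ZMod.val this
    rwa [ZMod.val_natCast_of_lt (Finset.mem_range.mp ha),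
      ZMod.val_natCast_of_lt (Finset.mem_range.mp hb)] at this
  · intro c _
    refine ⟨((c - 1) * (2 : ZMod p)⁻¹).val, Finset.mem_range.mpr (ZMod.val_lt _), ?_⟩
    push_cast
    rw [ZMod.natCast_val, ZMod.cast_id]
    field_simp
    ring

end CasimirAux

namespace CasimirAux

variable {p : ℕ} [Fact p.Prime]

open Polynomial

lemma comp_X_sq_injective {R : Type*} [CommRing R] [IsDomain R] {P Q : R[X]}
    (h : P.comp (X ^ 2) = Q.comp (X ^ 2)) : P = Q := by
  have h0 : (P - Q).comp (X ^ 2) = 0 := by rw [sub_comp, h, sub_self]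
  rcases comp_eq_zero_iff.mp h0 with h1 | ⟨_, h2⟩
  · exact sub_eq_zero.mp h1
  · exfalso
    have : ((X : R[X]) ^ 2).coeff 0 = 0 := by simp [coeff_X_pow]
    rw [this, map_zero] at h2
    exact pow_ne_zero 2 X_ne_zero h2

lemma idC (hp2 : p ≠ 2) :
    (∏ k ∈ Finset.range p,
        ((X : ((ZMod p)[X])[X]) - ((k : ℕ) : ((ZMod p)[X])[X]) ^ 2))
      = C ((X : (ZMod p)[X]) ^ p - X) ^ 2
        + ∏ k ∈ Finset.range p,
            ((X : ((ZMod p)[X])[X]) - (C (X : (ZMod p)[X]) + ((2 * k + 1 : ℕ) : ((ZMod p)[X])[X])) ^ 2) := by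
  set R := (ZMod p)[X]
  apply comp_X_sq_injective (R := R)
  have hcast : ∀ (n : ℕ), ((n : R[X])) = algebraMap (ZMod p) R[X] ((n : ℕ) : ZMod p) := by
    intro n; rw [map_natCast]
  have hXp : ∀ y : R[X], ∏ c : ZMod p, (y - algebraMap (ZMod p) R[X] c) = y ^ p - y :=
    prod_univ_zmod
  have hXpneg : ∀ y : R[X], ∏ c : ZMod p, (y + algebraMap (ZMod p) R[X] c) = y ^ p - y := by
    intro y
    rw [← Equiv.prod_comp (Equiv.neg (ZMod p)) (fun c => y + algebraMap (ZMod p) R[X] c)]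
    simp only [Equiv.neg_apply, map_neg, ← sub_eq_add_neg]
    exact hXp y
  -- LHS
  have hL : (∏ k ∈ Finset.range p,
        ((X : R[X]) - ((k : ℕ) : R[X]) ^ 2)).comp (X ^ 2)
      = ((X : R[X]) ^ p - X) * ((X : R[X]) ^ p - X) := by
    rw [prod_comp]
    have : ∀ k ∈ Finset.range p, ((X : R[X]) - ((k : ℕ) : R[X]) ^ 2).comp (X ^ 2)
        = ((X : R[X]) - ((k : ℕ) : R[X])) * ((X : R[X]) + ((k : ℕ) : R[X])) := by
      intro k _
      rw [sub_comp, X_comp, pow_comp, natCast_comp]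
      ring
    rw [Finset.prod_congr rfl this, Finset.prod_mul_distrib]
    have e1 : ∏ k ∈ Finset.range p, ((X : R[X]) - ((k : ℕ) : R[X]))
        = (X : R[X]) ^ p - X := by
      calc ∏ k ∈ Finset.range p, ((X : R[X]) - ((k : ℕ) : R[X]))
          = ∏ k ∈ Finset.range p,
              ((X : R[X]) - algebraMap (ZMod p) R[X] ((k : ℕ) : ZMod p)) := by
            refine Finset.prod_congr rfl fun k _ => by rw [hcast]
        _ = ∏ c : ZMod p, ((X : R[X]) - algebraMap (ZMod p) R[X] c) :=
            prod_range_cast (fun c => (X : R[X]) - algebraMap (ZMod p) R[X] c)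
        _ = (X : R[X]) ^ p - X := hXp X
    have e2 : ∏ k ∈ Finset.range p, ((X : R[X]) + ((k : ℕ) : R[X]))
        = (X : R[X]) ^ p - X := by
      calc ∏ k ∈ Finset.range p, ((X : R[X]) + ((k : ℕ) : R[X]))
          = ∏ k ∈ Finset.range p,
              ((X : R[X]) + algebraMap (ZMod p) R[X] ((k : ℕ) : ZMod p)) := by
            refine Finset.prod_congr rfl fun k _ => by rw [hcast]
        _ = ∏ c : ZMod p, ((X : R[X]) + algebraMap (ZMod p) R[X] c) :=
            prod_range_cast (fun c => (X : R[X]) + algebraMap (ZMod p) R[X] c)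
        _ = (X : R[X]) ^ p - X := hXpneg X
    rw [e1, e2]
  rw [hL, add_comp, pow_comp, C_comp, prod_comp]
  have : ∀ k ∈ Finset.range p,
      (((X : R[X]) - (C (X : R) + ((2 * k + 1 : ℕ) : R[X])) ^ 2)).comp (X ^ 2)
      = ((X : R[X]) - (C (X : R) + ((2 * k + 1 : ℕ) : R[X])))
        * ((X : R[X]) + (C (X : R) + ((2 * k + 1 : ℕ) : R[X]))) := by
    intro k _
    rw [sub_comp, X_comp, pow_comp, add_comp, C_comp, natCast_comp]
    ring
  rw [Finset.prod_congr rfl this, Finset.prod_mul_distrib]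
  have f1 : ∏ k ∈ Finset.range p,
      ((X : R[X]) - (C (X : R) + ((2 * k + 1 : ℕ) : R[X])))
      = ((X : R[X]) - C (X : R)) ^ p - ((X : R[X]) - C (X : R)) := by
    calc ∏ k ∈ Finset.range p, ((X : R[X]) - (C (X : R) + ((2 * k + 1 : ℕ) : R[X])))
        = ∏ k ∈ Finset.range p,
            (((X : R[X]) - C (X : R)) - algebraMap (ZMod p) R[X] ((2 * k + 1 : ℕ) : ZMod p)) := by
          refine Finset.prod_congr rfl fun k _ => by rw [hcast]; ring
      _ = ∏ c : ZMod p, (((X : R[X]) - C (X : R)) - algebraMap (ZMod p) R[X] c) :=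
          prod_range_odd hp2 (fun c => ((X : R[X]) - C (X : R)) - algebraMap (ZMod p) R[X] c)
      _ = _ := hXp _
  have f2 : ∏ k ∈ Finset.range p,
      ((X : R[X]) + (C (X : R) + ((2 * k + 1 : ℕ) : R[X])))
      = ((X : R[X]) + C (X : R)) ^ p - ((X : R[X]) + C (X : R)) := by
    calc ∏ k ∈ Finset.range p, ((X : R[X]) + (C (X : R) + ((2 * k + 1 : ℕ) : R[X])))
        = ∏ k ∈ Finset.range p,
            (((X : R[X]) + C (X : R)) + algebraMap (ZMod p) R[X] ((2 * k + 1 : ℕ) : ZMod p)) := by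
          refine Finset.prod_congr rfl fun k _ => by rw [hcast]; ring
      _ = ∏ c : ZMod p, (((X : R[X]) + C (X : R)) + algebraMap (ZMod p) R[X] c) :=
          prod_range_odd hp2 (fun c => ((X : R[X]) + C (X : R)) + algebraMap (ZMod p) R[X] c)
      _ = _ := hXpneg _
  rw [f1, f2]
  have hchar : CharP R[X] p := inferInstance
  rw [sub_pow_char, add_pow_char, map_sub, map_pow]
  ring

end CasimirAux

namespace CasimirAux

open Polynomial

variable {p : ℕ} [Fact p.Prime] {A : Type*} [Ring A]

lemma cast_comm (φ : ZMod p →+* A) (a : ZMod p) (x : A) : Commute (φ a) x := by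
  have hφ : φ a = ((a.val : ℕ) : A) := by
    conv_lhs => rw [show a = ((a.val : ℕ) : ZMod p) by simp [ZMod.natCast_val, ZMod.cast_id]]
    rw [map_natCast]
  rw [hφ]; exact Nat.cast_commute _ _

section NC

variable {e f h : A}

lemma he_shift (hhe : h * e = e * h + 2 * e) (c : A) (hc : c * e = e * c) :
    (h + c) * e = e * (h + c + 2) := by
  calc (h + c) * e = h * e + c * e := by noncomm_ring
    _ = e * h + 2 * e + e * c := by rw [hhe, hc]
    _ = e * (h + c + 2) := by noncomm_ring

lemma he_shift_sq (hhe : h * e = e * h + 2 * e) (c : A) (hc : c * e = e * c) :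
    (h + c) ^ 2 * e = e * (h + c + 2) ^ 2 := by
  calc (h + c) ^ 2 * e = (h + c) * ((h + c) * e) := by noncomm_ring
    _ = (h + c) * (e * (h + c + 2)) := by rw [he_shift hhe c hc]
    _ = ((h + c) * e) * (h + c + 2) := by noncomm_ring
    _ = (e * (h + c + 2)) * (h + c + 2) := by rw [he_shift hhe c hc]
    _ = e * (h + c + 2) ^ 2 := by noncomm_ring

lemma w_comm_e (hhe : h * e = e * h + 2 * e) (hef : e * f = f * e + h) :
    ((h + 1) ^ 2 + 4 * f * e) * e = e * ((h + 1) ^ 2 + 4 * f * e) := by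
  have h2 : (h + 1) ^ 2 * e = e * (h + 1 + 2) ^ 2 :=
    he_shift_sq hhe 1 (by rw [one_mul, mul_one])
  have hR : e * ((h + 1) ^ 2 + 4 * f * e)
      = e * (h + 1) ^ 2 + 4 * (f * (e * e)) + 4 * (e * h) + 8 * e := by
    calc e * ((h + 1) ^ 2 + 4 * f * e)
        = e * (h + 1) ^ 2 + 4 * ((e * f) * e) := by noncomm_ring
      _ = e * (h + 1) ^ 2 + 4 * ((f * e + h) * e) := by rw [hef]
      _ = e * (h + 1) ^ 2 + 4 * (f * (e * e)) + 4 * (h * e) := by noncomm_ring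
      _ = e * (h + 1) ^ 2 + 4 * (f * (e * e)) + 4 * (e * h + 2 * e) := by rw [hhe]
      _ = e * (h + 1) ^ 2 + 4 * (f * (e * e)) + 4 * (e * h) + 8 * e := by noncomm_ring
  calc ((h + 1) ^ 2 + 4 * f * e) * e
      = (h + 1) ^ 2 * e + 4 * (f * (e * e)) := by noncomm_ring
    _ = e * (h + 1 + 2) ^ 2 + 4 * (f * (e * e)) := by rw [h2]
    _ = e * (h + 1) ^ 2 + 4 * (f * (e * e)) + 4 * (e * h) + 8 * e := by noncomm_ring
    _ = e * ((h + 1) ^ 2 + 4 * f * e) := hR.symm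

lemma w_comm_h (hhe : h * e = e * h + 2 * e) (hhf : h * f = f * h - 2 * f) :
    Commute h ((h + 1) ^ 2 + 4 * f * e) := by
  show h * ((h + 1) ^ 2 + 4 * f * e) = ((h + 1) ^ 2 + 4 * f * e) * h
  have hfe : h * (f * e) = (f * e) * h := by
    calc h * (f * e) = (h * f) * e := by noncomm_ring
      _ = (f * h - 2 * f) * e := by rw [hhf]
      _ = f * (h * e) - 2 * (f * e) := by noncomm_ring
      _ = f * (e * h + 2 * e) - 2 * (f * e) := by rw [hhe]
      _ = (f * e) * h := by noncomm_ring
  calc h * ((h + 1) ^ 2 + 4 * f * e)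
      = h * (h + 1) ^ 2 + 4 * (h * (f * e)) := by noncomm_ring
    _ = h * (h + 1) ^ 2 + 4 * ((f * e) * h) := by rw [hfe]
    _ = ((h + 1) ^ 2 + 4 * f * e) * h := by noncomm_ring

lemma factor_e (hhe : h * e = e * h + 2 * e) (hef : e * f = f * e + h) (m : ℕ) :
    (((h + 1) ^ 2 + 4 * f * e) - (h + (m : A)) ^ 2) * e
      = e * (((h + 1) ^ 2 + 4 * f * e) - (h + ((m + 2 : ℕ) : A)) ^ 2) := by
  have hsq : (h + (m : A)) ^ 2 * e = e * (h + (m : A) + 2) ^ 2 :=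
    he_shift_sq hhe (m : A) (Nat.cast_commute m e).eq
  have hc : ((m + 2 : ℕ) : A) = (m : A) + 2 := by push_cast; ring
  rw [sub_mul, mul_sub, w_comm_e hhe hef, hsq, hc]
  ring_nf
  rw [add_assoc]

end NC
end CasimirAux

namespace CasimirAux

open Polynomial

variable {p : ℕ} [Fact p.Prime] {A : Type*} [Ring A]

section NC2

variable {e f h : A}

lemma prod_e (hhe : h * e = e * h + 2 * e) (hef : e * f = f * e + h) (n : ℕ) :
    ((List.range n).map fun k =>
        ((h + 1) ^ 2 + 4 * f * e) - (h + ((2 * k + 1 : ℕ) : A)) ^ 2).prod * e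
      = e * ((List.range n).map fun k =>
        ((h + 1) ^ 2 + 4 * f * e) - (h + ((2 * k + 3 : ℕ) : A)) ^ 2).prod := by
  induction n with
  | zero => simp
  | succ n ih =>
    rw [List.range_succ]
    simp only [List.map_append, List.prod_append, List.map_cons, List.map_nil,
      List.prod_cons, List.prod_nil, mul_one]
    have hstep : (((h + 1) ^ 2 + 4 * f * e) - (h + ((2 * n + 1 : ℕ) : A)) ^ 2) * e
        = e * (((h + 1) ^ 2 + 4 * f * e) - (h + ((2 * n + 3 : ℕ) : A)) ^ 2) := by
      have := factor_e hhe hef (2 * n + 1)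
      rwa [show (2 * n + 1 + 2 : ℕ) = 2 * n + 3 by omega] at this
    calc ((List.range n).map fun k =>
            ((h + 1) ^ 2 + 4 * f * e) - (h + ((2 * k + 1 : ℕ) : A)) ^ 2).prod
            * (((h + 1) ^ 2 + 4 * f * e) - (h + ((2 * n + 1 : ℕ) : A)) ^ 2) * e
        = ((List.range n).map fun k =>
            ((h + 1) ^ 2 + 4 * f * e) - (h + ((2 * k + 1 : ℕ) : A)) ^ 2).prod
            * ((((h + 1) ^ 2 + 4 * f * e) - (h + ((2 * n + 1 : ℕ) : A)) ^ 2) * e) :=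
          mul_assoc _ _ _
      _ = ((List.range n).map fun k =>
            ((h + 1) ^ 2 + 4 * f * e) - (h + ((2 * k + 1 : ℕ) : A)) ^ 2).prod
            * (e * (((h + 1) ^ 2 + 4 * f * e) - (h + ((2 * n + 3 : ℕ) : A)) ^ 2)) := by
          rw [hstep]
      _ = (((List.range n).map fun k =>
            ((h + 1) ^ 2 + 4 * f * e) - (h + ((2 * k + 1 : ℕ) : A)) ^ 2).prod * e)
            * (((h + 1) ^ 2 + 4 * f * e) - (h + ((2 * n + 3 : ℕ) : A)) ^ 2) :=
          (mul_assoc _ _ _).symm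
      _ = (e * ((List.range n).map fun k =>
            ((h + 1) ^ 2 + 4 * f * e) - (h + ((2 * k + 3 : ℕ) : A)) ^ 2).prod)
            * (((h + 1) ^ 2 + 4 * f * e) - (h + ((2 * n + 3 : ℕ) : A)) ^ 2) := by
          rw [ih]
      _ = e * (((List.range n).map fun k =>
            ((h + 1) ^ 2 + 4 * f * e) - (h + ((2 * k + 3 : ℕ) : A)) ^ 2).prod
            * (((h + 1) ^ 2 + 4 * f * e) - (h + ((2 * n + 3 : ℕ) : A)) ^ 2)) :=
          mul_assoc _ _ _

lemma lemA (hhe : h * e = e * h + 2 * e) (hef : e * f = f * e + h) (n : ℕ) :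
    (4 : A) ^ n * f ^ n * e ^ n
      = ((List.range n).map fun k =>
          ((h + 1) ^ 2 + 4 * f * e) - (h + ((2 * k + 1 : ℕ) : A)) ^ 2).prod := by
  induction n with
  | zero => simp
  | succ n ih =>
    have c4 : (4 : A) ^ n * f = f * (4 : A) ^ n := by
      have : Commute (4 : A) f := by
        have := Nat.cast_commute (4 : ℕ) f
        rwa [Nat.cast_ofNat] at this
      exact (this.pow_left n).eq
    have hG : ((List.range (n + 1)).map fun k =>
          ((h + 1) ^ 2 + 4 * f * e) - (h + ((2 * k + 1 : ℕ) : A)) ^ 2).prod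
        = (((h + 1) ^ 2 + 4 * f * e) - (h + 1) ^ 2)
          * ((List.range n).map fun k =>
              ((h + 1) ^ 2 + 4 * f * e) - (h + ((2 * k + 3 : ℕ) : A)) ^ 2).prod := by
      rw [List.range_succ_eq_map, List.map_cons, List.prod_cons, List.map_map]
      have h2 : ((fun k => ((h + 1) ^ 2 + 4 * f * e) - (h + ((2 * k + 1 : ℕ) : A)) ^ 2) ∘ Nat.succ)
          = fun k => ((h + 1) ^ 2 + 4 * f * e) - (h + ((2 * k + 3 : ℕ) : A)) ^ 2 := by
        funext k
        simp only [Function.comp_apply, Nat.succ_eq_add_one]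
        rw [show 2 * (k + 1) + 1 = 2 * k + 3 by omega]
      rw [h2, show ((2 * 0 + 1 : ℕ) : A) = 1 from by norm_num]
    calc (4 : A) ^ (n + 1) * f ^ (n + 1) * e ^ (n + 1)
        = (4 * (4 : A) ^ n) * (f * f ^ n) * (e ^ n * e) := by
          rw [pow_succ', pow_succ', pow_succ]
      _ = 4 * (((4 : A) ^ n * f) * (f ^ n * e ^ n)) * e := by noncomm_ring
      _ = 4 * ((f * (4 : A) ^ n) * (f ^ n * e ^ n)) * e := by rw [c4]
      _ = 4 * f * ((4 : A) ^ n * f ^ n * e ^ n) * e := by noncomm_ring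
      _ = 4 * f * ((List.range n).map fun k =>
            ((h + 1) ^ 2 + 4 * f * e) - (h + ((2 * k + 1 : ℕ) : A)) ^ 2).prod * e := by
          rw [ih]
      _ = (4 * f) * (((List.range n).map fun k =>
            ((h + 1) ^ 2 + 4 * f * e) - (h + ((2 * k + 1 : ℕ) : A)) ^ 2).prod * e) := by
          noncomm_ring
      _ = (4 * f) * (e * ((List.range n).map fun k =>
            ((h + 1) ^ 2 + 4 * f * e) - (h + ((2 * k + 3 : ℕ) : A)) ^ 2).prod) := by
          rw [prod_e hhe hef]
      _ = (4 * (f * e)) * ((List.range n).map fun k =>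
            ((h + 1) ^ 2 + 4 * f * e) - (h + ((2 * k + 3 : ℕ) : A)) ^ 2).prod := by
          noncomm_ring
      _ = (((h + 1) ^ 2 + 4 * f * e) - (h + 1) ^ 2)
          * ((List.range n).map fun k =>
            ((h + 1) ^ 2 + 4 * f * e) - (h + ((2 * k + 3 : ℕ) : A)) ^ 2).prod := by
          congr 1
          noncomm_ring
      _ = _ := hG.symm

end NC2
end CasimirAux

namespace CasimirAux

open Polynomial

variable {p : ℕ} [Fact p.Prime] {A : Type*} [Ring A]

theorem key (φ : ZMod p →+* A) (e f h : A)
    (hhe : h * e = e * h + 2 * e) (hhf : h * f = f * h - 2 * f) (hef : e * f = f * e + h) :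
    ((List.range p).map fun k : ℕ => ((h + 1) ^ 2 + 4 * f * e) - (k : A) ^ 2).prod
      = (h ^ p - h) ^ 2 + 4 * f ^ p * e ^ p := by
  by_cases hp2 : p = 2
  · subst hp2
    have h2 : (2 : A) = 0 := by
      have hh := map_natCast φ (2 : ℕ)
      rw [ZMod.natCast_self 2, map_zero] at hh
      simpa using hh.symm
    have h4 : (4 : A) = 0 := by
      have : (4 : A) = 2 * 2 := by norm_num
      rw [this, h2, mul_zero]
    have hLlist : ((List.range 2).map fun k : ℕ =>
          ((h + 1) ^ 2 + 4 * f * e) - (k : A) ^ 2).prod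
        = (((h + 1) ^ 2 + 4 * f * e) - 0 ^ 2) * (((h + 1) ^ 2 + 4 * f * e) - 1 ^ 2) := by
      rw [show List.range 2 = [0, 1] from rfl]
      simp only [List.map_cons, List.map_nil, List.prod_cons, List.prod_nil, mul_one,
        Nat.cast_zero, Nat.cast_one]
    have he1 : (h + 1) ^ 2 = h ^ 2 + 1 := by
      have hx : (h + 1) ^ 2 = h ^ 2 + 2 * h + 1 := by noncomm_ring
      rw [hx, h2, zero_mul, add_zero]
    have he2 : (h ^ 2 - h) ^ 2 = h ^ 2 * h ^ 2 + h ^ 2 - 2 * (h * h ^ 2) := by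
      noncomm_ring
    rw [hLlist, h4, he2, h2, he1]
    noncomm_ring
  · -- general odd case
    have hφ1c : ∀ a : ZMod p, Commute (φ a) h := fun a => cast_comm φ a h
    set φ1 : (ZMod p)[X] →+* A := eval₂RingHom' φ h hφ1c with hφ1def
    have hφ1 : ∀ q : (ZMod p)[X], Commute (φ1 q) ((h + 1) ^ 2 + 4 * f * e) := by
      intro q
      induction q using Polynomial.induction_on' with
      | add r s ih1 ih2 =>
        rw [map_add]
        exact ih1.add_left ih2
      | monomial n a =>
        have hm : φ1 (monomial n a) = φ a * h ^ n := by
          show eval₂ φ h (monomial n a) = _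
          rw [eval₂_monomial]
        rw [hm]
        exact (cast_comm φ a _).mul_left ((w_comm_h hhe hhf).pow_left n)
    set φ2 : ((ZMod p)[X])[X] →+* A :=
      eval₂RingHom' φ1 ((h + 1) ^ 2 + 4 * f * e) hφ1 with hφ2def
    have hφ2X : φ2 X = (h + 1) ^ 2 + 4 * f * e := eval₂_X _ _
    have hφ2C : ∀ q, φ2 (C q) = φ1 q := fun q => eval₂_C _ _
    have hφ1X : φ1 X = h := eval₂_X _ _
    have hL : ((List.range p).map fun k : ℕ =>
          ((h + 1) ^ 2 + 4 * f * e) - (k : A) ^ 2).prod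
        = φ2 (∏ k ∈ Finset.range p,
            ((X : ((ZMod p)[X])[X]) - ((k : ℕ) : ((ZMod p)[X])[X]) ^ 2)) := by
      rw [← list_range_prod, map_list_prod, List.map_map]
      have hfun : ((φ2 : ((ZMod p)[X])[X] →+* A) ∘ fun k : ℕ =>
            (X : ((ZMod p)[X])[X]) - ((k : ℕ) : ((ZMod p)[X])[X]) ^ 2)
          = fun k : ℕ => ((h + 1) ^ 2 + 4 * f * e) - (k : A) ^ 2 := by
        funext k
        simp only [Function.comp_apply]
        rw [map_sub, map_pow, map_natCast, hφ2X]
      rw [hfun]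
    rw [hL, idC hp2, map_add, map_pow, hφ2C, map_sub, map_pow, hφ1X]
    congr 1
    -- remaining: φ2 of the product equals 4 * f ^ p * e ^ p
    rw [← list_range_prod, map_list_prod, List.map_map]
    have hmap : ((List.range p).map
          ((φ2 : ((ZMod p)[X])[X] →+* A) ∘ fun k =>
            (X : ((ZMod p)[X])[X]) - (C (X : (ZMod p)[X]) + ((2 * k + 1 : ℕ) : ((ZMod p)[X])[X])) ^ 2))
        = (List.range p).map fun k =>
            ((h + 1) ^ 2 + 4 * f * e) - (h + ((2 * k + 1 : ℕ) : A)) ^ 2 := by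
      have hfun : ((φ2 : ((ZMod p)[X])[X] →+* A) ∘ fun k : ℕ =>
            (X : ((ZMod p)[X])[X])
              - (C (X : (ZMod p)[X]) + ((2 * k + 1 : ℕ) : ((ZMod p)[X])[X])) ^ 2)
          = fun k : ℕ => ((h + 1) ^ 2 + 4 * f * e) - (h + ((2 * k + 1 : ℕ) : A)) ^ 2 := by
        funext k
        simp only [Function.comp_apply]
        rw [map_sub, map_pow, map_add, hφ2C, hφ1X, map_natCast, hφ2X]
      rw [hfun]
    rw [hmap, ← lemA hhe hef p]
    have h4p : (4 : A) ^ p = (4 : A) := by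
      have h4 : (4 : A) = φ 4 := (map_ofNat φ 4).symm
      rw [h4, ← map_pow, ZMod.pow_card]
    rw [h4p]

end CasimirAux

namespace CasimirAux

variable (F : Type*) [Field F]

attribute [local instance 100] LieRing.ofAssociativeRing

lemma bracket_HE : ⁅sl2H F, sl2E F⁆ = (2 : F) • sl2E F := by
  apply Subtype.ext
  rw [LieSubalgebra.coe_bracket, Ring.lie_def]
  show ((sl2H F : Matrix (Fin 2) (Fin 2) F)) * (sl2E F : Matrix (Fin 2) (Fin 2) F)
      - (sl2E F : Matrix (Fin 2) (Fin 2) F) * (sl2H F : Matrix (Fin 2) (Fin 2) F)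
      = (2 : F) • (sl2E F : Matrix (Fin 2) (Fin 2) F)
  ext i j
  fin_cases i <;> fin_cases j <;>
    simp [sl2H, sl2E, LieAlgebra.SpecialLinear.val_single, Matrix.mul_apply, Matrix.single, Fin.sum_univ_two] <;>
    norm_num

lemma bracket_HF : ⁅sl2H F, sl2F F⁆ = (-2 : F) • sl2F F := by
  apply Subtype.ext
  rw [LieSubalgebra.coe_bracket, Ring.lie_def]
  show ((sl2H F : Matrix (Fin 2) (Fin 2) F)) * (sl2F F : Matrix (Fin 2) (Fin 2) F)
      - (sl2F F : Matrix (Fin 2) (Fin 2) F) * (sl2H F : Matrix (Fin 2) (Fin 2) F)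
      = (-2 : F) • (sl2F F : Matrix (Fin 2) (Fin 2) F)
  ext i j
  fin_cases i <;> fin_cases j <;>
    simp [sl2H, sl2F, LieAlgebra.SpecialLinear.val_single, Matrix.mul_apply, Matrix.single, Fin.sum_univ_two] <;>
    norm_num

lemma bracket_EF : ⁅sl2E F, sl2F F⁆ = sl2H F := by
  apply Subtype.ext
  rw [LieSubalgebra.coe_bracket, Ring.lie_def]
  show ((sl2E F : Matrix (Fin 2) (Fin 2) F)) * (sl2F F : Matrix (Fin 2) (Fin 2) F)
      - (sl2F F : Matrix (Fin 2) (Fin 2) F) * (sl2E F : Matrix (Fin 2) (Fin 2) F)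
      = (sl2H F : Matrix (Fin 2) (Fin 2) F)
  ext i j
  fin_cases i <;> fin_cases j <;>
    simp [sl2H, sl2E, sl2F, LieAlgebra.SpecialLinear.val_single, Matrix.mul_apply, Matrix.single, Fin.sum_univ_two]

lemma rel_he : (ι F (sl2H F) : UniversalEnvelopingAlgebra F (sl (Fin 2) F)) * ι F (sl2E F)
    = ι F (sl2E F) * ι F (sl2H F) + 2 * ι F (sl2E F) := by
  have h1 : ι F ⁅sl2H F, sl2E F⁆
      = ι F (sl2H F) * ι F (sl2E F) - ι F (sl2E F) * ι F (sl2H F) := by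
    rw [LieHom.map_lie, Ring.lie_def]
  rw [bracket_HE, map_smul] at h1
  have h2 : (2 : F) • (ι F (sl2E F) : UniversalEnvelopingAlgebra F (sl (Fin 2) F))
      = 2 * ι F (sl2E F) := by
    rw [Algebra.smul_def, map_ofNat]
  rw [h2] at h1
  rw [h1]
  noncomm_ring

lemma rel_hf : (ι F (sl2H F) : UniversalEnvelopingAlgebra F (sl (Fin 2) F)) * ι F (sl2F F)
    = ι F (sl2F F) * ι F (sl2H F) - 2 * ι F (sl2F F) := by
  have h1 : ι F ⁅sl2H F, sl2F F⁆
      = ι F (sl2H F) * ι F (sl2F F) - ι F (sl2F F) * ι F (sl2H F) := by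
    rw [LieHom.map_lie, Ring.lie_def]
  rw [bracket_HF, map_smul] at h1
  have h2 : (-2 : F) • (ι F (sl2F F) : UniversalEnvelopingAlgebra F (sl (Fin 2) F))
      = -(2 * ι F (sl2F F)) := by
    rw [Algebra.smul_def, RingHom.map_neg, map_ofNat, neg_mul]
  rw [h2] at h1
  have h3 : (ι F (sl2H F) : UniversalEnvelopingAlgebra F (sl (Fin 2) F)) * ι F (sl2F F)
      = -(2 * ι F (sl2F F)) + ι F (sl2F F) * ι F (sl2H F) := by
    rw [h1]
    noncomm_ring
  rw [h3]
  noncomm_ring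

lemma rel_ef : (ι F (sl2E F) : UniversalEnvelopingAlgebra F (sl (Fin 2) F)) * ι F (sl2F F)
    = ι F (sl2F F) * ι F (sl2E F) + ι F (sl2H F) := by
  have h1 : ι F ⁅sl2E F, sl2F F⁆
      = ι F (sl2E F) * ι F (sl2F F) - ι F (sl2F F) * ι F (sl2E F) := by
    rw [LieHom.map_lie, Ring.lie_def]
  rw [bracket_EF] at h1
  rw [h1]
  noncomm_ring

end CasimirAux

/-- In `U(sl₂(F))` over a field of prime characteristic `p`, with `w = (h+1)² + 4fe`,
`x = f^p`, `y = e^p`, `z = h^p − h`, one has `∏_{k=0}^{p−1} (w − k²) = z² + 4xy`. -/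
theorem casimir_integral_equation (F : Type*) [Field F] (p : ℕ) (hp : p.Prime) [CharP F p] :
    let e := ι F (sl2E F)
    let f := ι F (sl2F F)
    let h := ι F (sl2H F)
    let w := (h + 1) ^ 2 + 4 * f * e
    let x := f ^ p
    let y := e ^ p
    let z := h ^ p - h
    ((List.range p).map fun k : ℕ =>
        w - ((k : UniversalEnvelopingAlgebra F (sl (Fin 2) F)) ^ 2)).prod
      = z ^ 2 + 4 * x * y := by
  intro e f h w x y z
  haveI : Fact p.Prime := ⟨hp⟩
  exact CasimirAux.key
    ((algebraMap F (UniversalEnvelopingAlgebra F (sl (Fin 2) F))).comp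
      (ZMod.castHom (dvd_refl p) F))
    e f h (CasimirAux.rel_he F) (CasimirAux.rel_hf F) (CasimirAux.rel_ef F)

end
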